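/- Fix k ∈ ℕ with k ≥ 2. Let A ⊆ B be finite sets, let S_B be a (k+1)-uniform hypergraph on B satisfying condition (†), let S_A = {e ∈ S_B : e ⊆ A} be its restriction to A, and let R_A be a k-uniform hypergraph on A with K(R_A) = S_A. Then there exists a k-uniform hypergraph R_B on B such that K(R_B) = S_B and {e ∈ R_B : e ⊆ A} = R_A. -/
import Mathlib


variable {α : Type*} [DecidableEq α]

/-- `R` is a `k`-uniform hypergraph on the vertex set `V`. -/
def IsHypergraph (k : ℕ) (V : Finset α) (R : Set (Finset α)) : Prop :=
  ∀ e ∈ R, e ⊆ V ∧ e.card = k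

/-- The Kay-graph of a `k`-uniform hypergraph `R` on `V`: the `(k+1)`-uniform hypergraph
on `V` whose hyperedges are the `(k+1)`-element subsets `A` of `V` such that the number of
`k`-element subsets of `A` belonging to `R` is congruent to `k + 1` modulo `2`. -/
def kay (k : ℕ) (V : Finset α) (R : Set (Finset α)) : Set (Finset α) :=
  {A | A ⊆ V ∧ A.card = k + 1 ∧
    {e : Finset α | e ⊆ A ∧ e.card = k ∧ e ∈ R}.ncard % 2 = (k + 1) % 2}

/-- Condition (†) for a `(k+1)`-uniform hypergraph `S` on `V`: for every `(k+2)`-element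
subset `W` of `V`, the number of `(k+1)`-element subsets of `W` belonging to `S` is
congruent to `k` modulo `2`. -/
def dagger (k : ℕ) (V : Finset α) (S : Set (Finset α)) : Prop :=
  ∀ W : Finset α, W ⊆ V → W.card = k + 2 →
    {A : Finset α | A ⊆ W ∧ A.card = k + 1 ∧ A ∈ S}.ncard % 2 = k % 2

private lemma zmod2_cases (a : ZMod 2) : a = 0 ∨ a = 1 := by revert a; decide

private lemma zmod2_ite (a : ZMod 2) : (if a = 1 then (1 : ZMod 2) else 0) = a := by
  rcases zmod2_cases a with h | h <;> simp [h]

private lemma zmod2_ne (a b : ZMod 2) (h : a ≠ b) : a = b + 1 := by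
  revert a b; decide

private lemma zmod2_add_self (a : ZMod 2) : a + a = 0 := by revert a; decide

open Finset in
private lemma ncard_erase_sum (W : Finset α) (m : ℕ) (hW : W.card = m + 1) (S : Set (Finset α))
    [DecidablePred (· ∈ S)] :
    ({e : Finset α | e ⊆ W ∧ e.card = m ∧ e ∈ S}.ncard : ZMod 2)
      = ∑ b ∈ W, (if W.erase b ∈ S then (1 : ZMod 2) else 0) := by
  classical
  have hset : {e : Finset α | e ⊆ W ∧ e.card = m ∧ e ∈ S}
      = ↑((W.filter fun b => W.erase b ∈ S).image (W.erase ·)) := by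
    ext e
    simp only [Finset.coe_image, Set.mem_image, Finset.mem_coe, Finset.mem_filter,
      Set.mem_setOf_eq]
    constructor
    · rintro ⟨h1, h2, h3⟩
      have hne : ¬ W ⊆ e := fun h => by
        have := Finset.card_le_card h; omega
      obtain ⟨b, hbW, hbe⟩ := Finset.not_subset.mp hne
      have hsub : e ⊆ W.erase b := fun x hx =>
        Finset.mem_erase.mpr ⟨fun hxb => hbe (hxb ▸ hx), h1 hx⟩
      have hcard : (W.erase b).card = m := by
        rw [Finset.card_erase_of_mem hbW, hW]; omega
      have he : e = W.erase b := Finset.eq_of_subset_of_card_le hsub (by omega)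
      exact ⟨b, ⟨hbW, he ▸ h3⟩, he.symm⟩
    · rintro ⟨b, ⟨hbW, hbS⟩, rfl⟩
      exact ⟨Finset.erase_subset _ _, by rw [Finset.card_erase_of_mem hbW, hW]; omega, hbS⟩
  rw [hset, Set.ncard_coe_finset,
    Finset.card_image_of_injOn (Finset.erase_injOn W |>.mono (Finset.filter_subset _ _)),
    Finset.card_filter]
  push_cast
  rfl


private lemma step_lemma (k : ℕ) (hk : 2 ≤ k) (A B : Finset α) (hAB : A ⊆ B) (v : α)
    (hvB : v ∈ B) (hvA : v ∉ A) (S_B : Set (Finset α)) (hS : IsHypergraph (k + 1) B S_B)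
    (hdag : dagger k B S_B) (R_A : Set (Finset α)) (hR_A : IsHypergraph k A R_A)
    (hkayA : kay k A R_A = {e : Finset α | e ∈ S_B ∧ e ⊆ A}) :
    ∃ R' : Set (Finset α), IsHypergraph k (insert v A) R' ∧
      kay k (insert v A) R' = {e : Finset α | e ∈ S_B ∧ e ⊆ insert v A} ∧
      {e : Finset α | e ∈ R' ∧ e ⊆ A} = R_A := by
  classical
  set c : Finset α → ZMod 2 := fun g =>
    (k : ZMod 2) + (if insert v g ∈ S_B then 1 else 0) + (if g ∈ R_A then 1 else 0) with hc
  have hkay_sum : ∀ h : Finset α, h ⊆ A → h.card = k + 1 →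
      (∑ b ∈ h, if h.erase b ∈ R_A then (1 : ZMod 2) else 0)
        = (k : ZMod 2) + (if h ∈ S_B then 1 else 0) := by
    intro h hhA hhc
    have hiff : h ∈ S_B ↔
        (∑ b ∈ h, if h.erase b ∈ R_A then (1 : ZMod 2) else 0) = (k : ZMod 2) + 1 := by
      have h1 : h ∈ S_B ↔ h ∈ kay k A R_A := by
        rw [hkayA]; exact ⟨fun hh => ⟨hh, hhA⟩, fun hh => hh.1⟩
      rw [h1]
      have h2 : h ∈ kay k A R_A ↔
          {e : Finset α | e ⊆ h ∧ e.card = k ∧ e ∈ R_A}.ncard % 2 = (k + 1) % 2 := by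
        simp [kay, hhA, hhc]
      rw [h2, ← ZMod.natCast_eq_natCast_iff', ncard_erase_sum h k hhc R_A]
      push_cast
      rfl
    by_cases hhS : h ∈ S_B
    · rw [hiff.mp hhS, if_pos hhS]
    · have hne : (∑ b ∈ h, if h.erase b ∈ R_A then (1 : ZMod 2) else 0) ≠ (k : ZMod 2) + 1 :=
        fun hcon => hhS (hiff.mpr hcon)
      have := zmod2_ne _ _ hne
      rw [this, if_neg hhS, add_zero, add_assoc]
      norm_num
      exact zmod2_add_self 1
  have hdag_sum : ∀ h : Finset α, h ⊆ A → h.card = k + 1 →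
      (∑ b ∈ h, if insert v (h.erase b) ∈ S_B then (1 : ZMod 2) else 0)
        = (k : ZMod 2) + (if h ∈ S_B then 1 else 0) := by
    intro h hhA hhc
    have hvh : v ∉ h := fun hmem => hvA (hhA hmem)
    have hWB : insert v h ⊆ B := Finset.insert_subset hvB (hhA.trans hAB)
    have hWc : (insert v h).card = (k + 1) + 1 := by
      rw [Finset.card_insert_of_notMem hvh, hhc]
    have hd := hdag (insert v h) hWB (by omega)
    have hd2 := (ZMod.natCast_eq_natCast_iff' _ _ 2).mpr hd
    rw [ncard_erase_sum (insert v h) (k + 1) hWc S_B, Finset.sum_insert hvh,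
      Finset.erase_insert hvh] at hd2
    have hrw : ∀ b ∈ h, (if (insert v h).erase b ∈ S_B then (1 : ZMod 2) else 0)
        = (if insert v (h.erase b) ∈ S_B then (1 : ZMod 2) else 0) := by
      intro b hb
      have hvb : v ≠ b := fun hh => hvh (hh ▸ hb)
      rw [Finset.erase_insert_of_ne hvb]
    rw [Finset.sum_congr rfl hrw] at hd2
    -- hd2 : ind + Σ = k; conclude Σ = k + ind
    have := congrArg (fun x => (if h ∈ S_B then (1 : ZMod 2) else 0) + x) hd2
    simp only [← add_assoc] at this
    rw [zmod2_add_self, zero_add] at this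
    rw [this, add_comm]
  have hcoc : ∀ h : Finset α, h ⊆ A → h.card = k + 1 → ∑ b ∈ h, c (h.erase b) = 0 := by
    intro h hhA hhc
    have hsplit : ∑ b ∈ h, c (h.erase b)
        = (∑ _b ∈ h, (k : ZMod 2))
          + (∑ b ∈ h, if insert v (h.erase b) ∈ S_B then (1 : ZMod 2) else 0)
          + ∑ b ∈ h, if h.erase b ∈ R_A then (1 : ZMod 2) else 0 := by
      simp only [hc, ← Finset.sum_add_distrib]
    rw [hsplit, hdag_sum h hhA hhc, hkay_sum h hhA hhc, Finset.sum_const, hhc]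
    have hsm : (k + 1) • (k : ZMod 2) = 0 := by
      rw [nsmul_eq_mul]
      have : (((k + 1) * k : ℕ) : ZMod 2) = 0 := by
        rw [ZMod.natCast_eq_zero_iff]
        have := Nat.even_mul_succ_self k
        rw [Nat.mul_comm] at this
        exact this.two_dvd
      push_cast at this
      exact_mod_cast this
    rw [hsm, zero_add]
    exact zmod2_add_self _
  obtain ⟨X, hXsub, hX⟩ : ∃ X : Set (Finset α),
      (∀ f ∈ X, f ⊆ A ∧ f.card = k - 1) ∧
      (∀ g : Finset α, g ⊆ A → g.card = k →
        (∑ b ∈ g, if g.erase b ∈ X then (1 : ZMod 2) else 0) = c g) := by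
    rcases A.eq_empty_or_nonempty with rfl | ⟨a₀, ha₀⟩
    · refine ⟨∅, by simp, ?_⟩
      intro g hg hgc
      rw [Finset.subset_empty] at hg
      subst hg
      simp at hgc
      omega
    · set Xs : Set (Finset α) := {f | f ⊆ A ∧ f.card = k - 1 ∧ a₀ ∉ f ∧ c (insert a₀ f) = 1}
        with hXs
      refine ⟨Xs, fun f hf => ⟨hf.1, hf.2.1⟩, ?_⟩
      intro g hgA hgc
      by_cases ha : a₀ ∈ g
      · rw [Finset.sum_eq_single a₀]
        · have h1 : g.erase a₀ ⊆ A := (Finset.erase_subset _ _).trans hgA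
          have h2 : (g.erase a₀).card = k - 1 := by
            rw [Finset.card_erase_of_mem ha, hgc]
          have h3 : a₀ ∉ g.erase a₀ := Finset.notMem_erase _ _
          have h4 : insert a₀ (g.erase a₀) = g := Finset.insert_erase ha
          have hmem : g.erase a₀ ∈ Xs ↔ c g = 1 := by
            simp [hXs, Set.mem_setOf_eq, h1, h2, h3, h4]
          by_cases hme : g.erase a₀ ∈ Xs
          · rw [if_pos hme, (hmem.mp hme)]
          · rw [if_neg hme]
            rcases zmod2_cases (c g) with hcg | hcg
            · rw [hcg]
            · exact absurd (hmem.mpr hcg) hme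
        · intro b hb hne
          have : a₀ ∈ g.erase b := Finset.mem_erase.mpr ⟨fun hh => hne hh.symm, ha⟩
          rw [if_neg]
          intro hmem
          exact hmem.2.2.1 this
        · intro hcon
          exact absurd ha hcon
      · trans (∑ b ∈ g, c (insert a₀ (g.erase b)))
        · refine Finset.sum_congr rfl fun b hb => ?_
          have h1 : g.erase b ⊆ A := (Finset.erase_subset _ _).trans hgA
          have h2 : (g.erase b).card = k - 1 := by
            rw [Finset.card_erase_of_mem hb, hgc]
          have h3 : a₀ ∉ g.erase b := fun hh => ha (Finset.mem_of_mem_erase hh)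
          have hmem : g.erase b ∈ Xs ↔ c (insert a₀ (g.erase b)) = 1 := by
            simp [hXs, Set.mem_setOf_eq, h1, h2, h3]
          by_cases hme : g.erase b ∈ Xs
          · rw [if_pos hme, (hmem.mp hme)]
          · rw [if_neg hme]
            rcases zmod2_cases (c (insert a₀ (g.erase b))) with hcg | hcg
            · rw [hcg]
            · exact absurd (hmem.mpr hcg) hme
        have hins : (insert a₀ g).card = k + 1 := by
          rw [Finset.card_insert_of_notMem ha, hgc]
        have hsubA : insert a₀ g ⊆ A := Finset.insert_subset ha₀ hgA
        have h0 := hcoc (insert a₀ g) hsubA hins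
        rw [Finset.sum_insert ha, Finset.erase_insert ha] at h0
        have hrw : ∀ b ∈ g, c ((insert a₀ g).erase b) = c (insert a₀ (g.erase b)) := by
          intro b hb
          have : a₀ ≠ b := fun hh => ha (hh ▸ hb)
          rw [Finset.erase_insert_of_ne this]
        rw [Finset.sum_congr rfl hrw] at h0
        calc ∑ b ∈ g, c (insert a₀ (g.erase b))
            = (c g + c g) + ∑ b ∈ g, c (insert a₀ (g.erase b)) := by
              rw [zmod2_add_self, zero_add]
          _ = c g + (c g + ∑ b ∈ g, c (insert a₀ (g.erase b))) := by rw [add_assoc]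
          _ = c g := by rw [h0, add_zero]
  set R' : Set (Finset α) := R_A ∪ {e | v ∈ e ∧ e.erase v ∈ X} with hR'
  have hmemA : ∀ e : Finset α, e ⊆ A → (e ∈ R' ↔ e ∈ R_A) := by
    intro e heA
    constructor
    · rintro (h | ⟨hv, _⟩)
      · exact h
      · exact absurd (heA hv) hvA
    · exact fun h => Or.inl h
  have hmemv : ∀ f : Finset α, v ∉ f → (insert v f ∈ R' ↔ f ∈ X) := by
    intro f hvf
    constructor
    · rintro (h | ⟨_, h2⟩)
      · exact absurd ((hR_A _ h).1 (Finset.mem_insert_self v f)) hvA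
      · rwa [Finset.erase_insert hvf] at h2
    · intro h
      exact Or.inr ⟨Finset.mem_insert_self _ _, by rwa [Finset.erase_insert hvf]⟩
  refine ⟨R', ?_, ?_, ?_⟩
  · rintro e (h | ⟨hv, hX'⟩)
    · exact ⟨(hR_A e h).1.trans (Finset.subset_insert _ _), (hR_A e h).2⟩
    · obtain ⟨h1, h2⟩ := hXsub _ hX'
      constructor
      · intro x hx
        rcases eq_or_ne x v with rfl | hxv
        · exact Finset.mem_insert_self _ _
        · exact Finset.mem_insert_of_mem (h1 (Finset.mem_erase.mpr ⟨hxv, hx⟩))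
      · have := Finset.card_erase_add_one hv
        omega
  · have main : ∀ e : Finset α, e ⊆ insert v A → e.card = k + 1 →
        ({f : Finset α | f ⊆ e ∧ f.card = k ∧ f ∈ R'}.ncard % 2 = (k + 1) % 2 ↔ e ∈ S_B) := by
      intro e heA hec
      rw [← ZMod.natCast_eq_natCast_iff', ncard_erase_sum e k hec R']
      by_cases hve : v ∈ e
      · set g := e.erase v with hg
        have hvg : v ∉ g := Finset.notMem_erase _ _
        have hgA : g ⊆ A := by
          intro x hx
          obtain ⟨hxv, hxe⟩ := Finset.mem_erase.mp hx
          exact (Finset.mem_insert.mp (heA hxe)).resolve_left hxv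
        have hgc : g.card = k := by
          rw [hg, Finset.card_erase_of_mem hve, hec]; omega
        have hge : insert v g = e := Finset.insert_erase hve
        rw [← hge, Finset.sum_insert hvg, Finset.erase_insert hvg]
        have hterm : ∀ b ∈ g, (if (insert v g).erase b ∈ R' then (1 : ZMod 2) else 0)
            = (if g.erase b ∈ X then (1 : ZMod 2) else 0) := by
          intro b hb
          have hbv : v ≠ b := fun hh => hvg (hh ▸ hb)
          rw [Finset.erase_insert_of_ne hbv,
            if_congr (hmemv (g.erase b) (fun hh => hvg (Finset.mem_of_mem_erase hh))) rfl rfl]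
        rw [Finset.sum_congr rfl hterm, hX g hgA hgc,
          if_congr (hmemA g hgA) rfl rfl]
        have hval : (if g ∈ R_A then (1 : ZMod 2) else 0) + c g
            = (k : ZMod 2) + (if insert v g ∈ S_B then 1 else 0) := by
          simp only [hc]
          set rr := (if g ∈ R_A then (1 : ZMod 2) else 0)
          set ee := (if insert v g ∈ S_B then (1 : ZMod 2) else 0)
          have : rr + ((k : ZMod 2) + ee + rr) = (k : ZMod 2) + ee + (rr + rr) := by ring
          rw [this, zmod2_add_self, add_zero]
        rw [hval]
        push_cast
        constructor
        · intro hh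
          by_contra hns
          rw [if_neg hns, add_zero] at hh
          have : (k : ZMod 2) + 1 = (k : ZMod 2) + 0 := by rw [← hh, add_zero]
          have := add_left_cancel this
          exact one_ne_zero this
        · intro hh
          rw [if_pos hh]
      · have heA' : e ⊆ A := fun x hx =>
          (Finset.mem_insert.mp (heA hx)).resolve_left (fun hh => hve (hh ▸ hx))
        have hterm : ∀ b ∈ e, (if e.erase b ∈ R' then (1 : ZMod 2) else 0)
            = (if e.erase b ∈ R_A then (1 : ZMod 2) else 0) := by
          intro b hb
          rw [if_congr (hmemA _ ((Finset.erase_subset _ _).trans heA')) rfl rfl]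
        rw [Finset.sum_congr rfl hterm, hkay_sum e heA' hec]
        push_cast
        constructor
        · intro hh
          by_contra hns
          rw [if_neg hns, add_zero] at hh
          have h' : (k : ZMod 2) + 0 = (k : ZMod 2) + 1 := by rw [add_zero]; exact hh
          exact one_ne_zero (add_left_cancel h').symm
        · intro hh
          rw [if_pos hh]
    ext e
    simp only [kay, Set.mem_setOf_eq]
    constructor
    · rintro ⟨h1, h2, h3⟩
      exact ⟨(main e h1 h2).mp h3, h1⟩
    · rintro ⟨h1, h2⟩
      exact ⟨h2, (hS e h1).2, (main e h2 (hS e h1).2).mpr h1⟩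
  · ext e
    simp only [Set.mem_setOf_eq]
    constructor
    · rintro ⟨h1, h2⟩
      exact (hmemA e h2).mp h1
    · intro h
      exact ⟨Or.inl h, (hR_A e h).1⟩


/-- If `S_B` is a `(k+1)`-uniform hypergraph on `B` satisfying (†), `A ⊆ B`, and `R_A` is
a `k`-uniform hypergraph on `A` whose Kay-graph is the restriction of `S_B` to `A`, then
`R_A` extends to a `k`-uniform hypergraph `R_B` on `B` whose Kay-graph is `S_B`. -/
theorem kay_preimage_extension (k : ℕ) (hk : 2 ≤ k) (A B : Finset α) (hAB : A ⊆ B)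
    (S_B : Set (Finset α)) (hS : IsHypergraph (k + 1) B S_B) (hdag : dagger k B S_B)
    (R_A : Set (Finset α)) (hR_A : IsHypergraph k A R_A)
    (hkayA : kay k A R_A = {e : Finset α | e ∈ S_B ∧ e ⊆ A}) :
    ∃ R_B : Set (Finset α), IsHypergraph k B R_B ∧ kay k B R_B = S_B ∧
      {e : Finset α | e ∈ R_B ∧ e ⊆ A} = R_A := by
  classical
  suffices H : ∀ n (A : Finset α) (R_A : Set (Finset α)), A ⊆ B → IsHypergraph k A R_A →
      kay k A R_A = {e : Finset α | e ∈ S_B ∧ e ⊆ A} → (B \ A).card = n →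
      ∃ R_B : Set (Finset α), IsHypergraph k B R_B ∧ kay k B R_B = S_B ∧
        {e : Finset α | e ∈ R_B ∧ e ⊆ A} = R_A by
    exact H _ A R_A hAB hR_A hkayA rfl
  intro n
  induction n with
  | zero =>
    intro A R_A hAB hR_A hkayA hn
    have hBA : B ⊆ A := by
      intro x hx
      by_contra hxA
      have : x ∈ B \ A := Finset.mem_sdiff.mpr ⟨hx, hxA⟩
      rw [Finset.card_eq_zero.mp hn] at this
      exact absurd this (Finset.notMem_empty x)
    have hA : A = B := Finset.Subset.antisymm hAB hBA
    subst hA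
    refine ⟨R_A, hR_A, ?_, ?_⟩
    · rw [hkayA]
      ext e
      simp only [Set.mem_setOf_eq]
      exact ⟨fun h => h.1, fun h => ⟨h, (hS e h).1⟩⟩
    · ext e
      simp only [Set.mem_setOf_eq]
      exact ⟨fun h => h.1, fun h => ⟨h, (hR_A e h).1⟩⟩
  | succ n ih =>
    intro A R_A hAB hR_A hkayA hn
    have hne : (B \ A).Nonempty := by
      rw [← Finset.card_pos, hn]; omega
    obtain ⟨v, hv⟩ := hne
    have hvB : v ∈ B := (Finset.mem_sdiff.mp hv).1
    have hvA : v ∉ A := (Finset.mem_sdiff.mp hv).2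
    obtain ⟨R', h1, h2, h3⟩ := step_lemma k hk A B hAB v hvB hvA S_B hS hdag R_A hR_A hkayA
    have hA'B : insert v A ⊆ B := Finset.insert_subset hvB hAB
    have hcard : (B \ insert v A).card = n := by
      rw [Finset.sdiff_insert, Finset.card_erase_of_mem hv, hn]; omega
    obtain ⟨R_B, hh1, hh2, hh3⟩ := ih (insert v A) R' hA'B h1 h2 hcard
    refine ⟨R_B, hh1, hh2, ?_⟩
    ext e
    simp only [Set.mem_setOf_eq]
    constructor
    · rintro ⟨he1, he2⟩
      have heR' : e ∈ R' := (Set.ext_iff.mp hh3 e).mp ⟨he1, he2.trans (Finset.subset_insert _ _)⟩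
      exact (Set.ext_iff.mp h3 e).mp ⟨heR', he2⟩
    · intro he
      obtain ⟨heR', heA⟩ := (Set.ext_iff.mp h3 e).mpr he
      obtain ⟨heB, -⟩ := (Set.ext_iff.mp hh3 e).mpr heR'
      exact ⟨heB, heA⟩
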